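/- For v ∈ W one has R(v) = 0 if and only if v has rank at most one, i.e. if and only if for every w ∈ W there exists λ ∈ F with t(v,v,w) = λ·v. -/

import Mathlib

open Matrix

noncomputable section

variable {F : Type*} [Field F]

/-- The linearization `x × y := (x+y)^# - x^# - y^#` of the adjugate. -/
def xmul (x y : Matrix (Fin 3) (Fin 3) F) : Matrix (Fin 3) (Fin 3) F :=
  (x + y).adjugate - x.adjugate - y.adjugate

/-- The trace pairing `(x, y) := tr (x y)`. -/
def tp (x y : Matrix (Fin 3) (Fin 3) F) : F := (x * y).trace

/-- The space `W = F ⊕ A ⊕ A ⊕ F` with `A = M₃(F)`. -/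
abbrev Wsp (F : Type*) : Type _ :=
  F × Matrix (Fin 3) (Fin 3) F × Matrix (Fin 3) (Fin 3) F × F

/-- Freudenthal's quartic form on `W`. -/
def qf (v : Wsp F) : F :=
  match v with
  | (a, b, c, d) =>
      (a * d - tp b c) ^ 2 + 4 * a * c.det + 4 * d * b.det
        - 4 * tp b.adjugate c.adjugate

/-- The symplectic form on `W`. -/
def symp (v v' : Wsp F) : F :=
  match v, v' with
  | (a, b, c, d), (a', b', c', d') => a * d' - tp b c' + tp c b' - d * a'

/-- The map `v ↦ v^♭`. -/
def flat (v : Wsp F) : Wsp F :=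
  match v with
  | (a, b, c, d) =>
      (-(a ^ 2 * d) + a * tp b c - 2 * b.det,
       (-(2 : F)) • xmul c b.adjugate + (2 * a) • c.adjugate - (a * d - tp b c) • b,
       (2 : F) • xmul b c.adjugate - (2 * d) • b.adjugate + (a * d - tp b c) • c,
       a * d ^ 2 - d * tp b c + 2 * c.det)

/-- The symmetric trilinear map `t` on `W`, normalized by `t(v,v,v) = v^♭`. -/
def tW (x y z : Wsp F) : Wsp F :=
  (6 : F)⁻¹ •
    (flat (x + y + z) - flat (x + y) - flat (x + z) - flat (y + z)
      + flat x + flat y + flat z)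

/-- The element `R(v)` of `M₂(A)`. -/
def Rv (v : Wsp F) : Matrix (Fin 2) (Fin 2) (Matrix (Fin 3) (Fin 3) F) :=
  match v with
  | (a, b, c, d) =>
      !![(a * d - tp c b) • (1 : Matrix (Fin 3) (Fin 3) F) + (2 : F) • (c * b),
          (2 : F) • b.adjugate - (2 * a) • c;
         (2 * d) • b - (2 : F) • c.adjugate,
          (-(a * d) + tp b c) • (1 : Matrix (Fin 3) (Fin 3) F) - (2 : F) • (b * c)]

/-- The element `ℓ^!` of `W` attached to a row vector `ℓ = (s, t) ∈ A²`. -/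
def rowShriek (s t : Matrix (Fin 3) (Fin 3) F) : Wsp F :=
  (s.det, s.adjugate * t, t.adjugate * s, t.det)

/-- The element `η^!` of `W` attached to a column vector `η = (u, w) ∈ A²`. -/
def colShriek (u w : Matrix (Fin 3) (Fin 3) F) : Wsp F :=
  (u.det, w * u.adjugate, u * w.adjugate, w.det)

/-! ### Auxiliary machinery for statement3 -/

section Aux

variable [CharZero F]

/-- Block `P = R(v)₀₀`. -/
def Pm (a d : F) (b c : Matrix (Fin 3) (Fin 3) F) : Matrix (Fin 3) (Fin 3) F :=
  (a * d - tp c b) • (1 : Matrix (Fin 3) (Fin 3) F) + (2 : F) • (c * b)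

/-- Block `Q = R(v)₀₁`. -/
def Qm (a : F) (b c : Matrix (Fin 3) (Fin 3) F) : Matrix (Fin 3) (Fin 3) F :=
  (2 : F) • b.adjugate - (2 * a) • c

/-- Block `S = R(v)₁₀`. -/
def Sm (d : F) (b c : Matrix (Fin 3) (Fin 3) F) : Matrix (Fin 3) (Fin 3) F :=
  (2 * d) • b - (2 : F) • c.adjugate

/-- Block `T = R(v)₁₁`. -/
def Tm (a d : F) (b c : Matrix (Fin 3) (Fin 3) F) : Matrix (Fin 3) (Fin 3) F :=
  (-(a * d) + tp b c) • (1 : Matrix (Fin 3) (Fin 3) F) - (2 : F) • (b * c)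

lemma Rv_blocks (a d : F) (b c : Matrix (Fin 3) (Fin 3) F) :
    Rv ((a, b, c, d) : Wsp F) = !![Pm a d b c, Qm a b c; Sm d b c, Tm a d b c] := rfl

@[simp] lemma xmul_zero_left (x : Matrix (Fin 3) (Fin 3) F) : xmul 0 x = 0 := by
  simp [xmul]

@[simp] lemma xmul_zero_right (x : Matrix (Fin 3) (Fin 3) F) : xmul x 0 = 0 := by
  simp [xmul]

@[simp] lemma tp_zero_left (x : Matrix (Fin 3) (Fin 3) F) : tp 0 x = 0 := by
  simp [tp]

@[simp] lemma tp_zero_right (x : Matrix (Fin 3) (Fin 3) F) : tp x 0 = 0 := by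
  simp [tp]

set_option maxHeartbeats 4000000 in
/-- The master identity:
`6 t(v,v,w) = -2⟨v,w⟩ v + (R(v)-linear terms in w)`. -/
theorem MI0 (a d a' d' : F) (b c b' c' : Matrix (Fin 3) (Fin 3) F) :
    (6 : F) • tW (a,b,c,d) (a,b,c,d) (a',b',c',d') =
      (-2 * symp (a,b,c,d) (a',b',c',d')) • ((a,b,c,d) : Wsp F)
        + (-2 * a' * (Pm a d b c).trace - 2 * tp b' (Qm a b c),
           (-2 * a') • Sm d b c + (2:F) • (b' * Pm a d b c) - (2 * (Pm a d b c).trace) • b'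
             - (2:F) • (Tm a d b c * b') - (2:F) • xmul c' (Qm a b c),
           (-2 : F) • xmul b' (Sm d b c) + (2 * (Pm a d b c).trace) • c'
             - (2:F) • (Pm a d b c * c') + (2:F) • (c' * Tm a d b c) - (2 * d') • Qm a b c,
           -2 * tp c' (Sm d b c) + 2 * (Pm a d b c).trace * d') := by
  refine Prod.ext_iff.mpr ⟨?_, Prod.ext_iff.mpr ⟨?_, Prod.ext_iff.mpr ⟨?_, ?_⟩⟩⟩
  · simp only [tW, flat, symp, tp, xmul, Pm, Qm, Sm, Tm, Prod.smul_mk, Prod.mk_add_mk,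
      Prod.mk_sub_mk, smul_eq_mul]
    simp [Matrix.det_fin_three, Matrix.adjugate_fin_three, Matrix.trace_fin_three,
      Matrix.mul_apply, Fin.sum_univ_three, Matrix.one_fin_three,
      Matrix.cons_val_zero, Matrix.cons_val_one, Matrix.head_cons, Matrix.cons_val_two,
      Matrix.vecTail, Matrix.vecHead]
    ring
  · simp only [tW, flat, symp, tp, xmul, Pm, Qm, Sm, Tm, Prod.smul_mk, Prod.mk_add_mk,
      Prod.mk_sub_mk, smul_eq_mul]
    ext i j
    fin_cases i <;> fin_cases j <;>
      (simp [Matrix.det_fin_three, Matrix.adjugate_fin_three, Matrix.trace_fin_three,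
        Matrix.mul_apply, Fin.sum_univ_three, Matrix.one_fin_three,
        Matrix.cons_val_zero, Matrix.cons_val_one, Matrix.head_cons, Matrix.cons_val_two,
        Matrix.vecTail, Matrix.vecHead, Matrix.add_apply, Matrix.sub_apply,
        Matrix.smul_apply, Matrix.neg_apply, smul_eq_mul]; try ring)
  · simp only [tW, flat, symp, tp, xmul, Pm, Qm, Sm, Tm, Prod.smul_mk, Prod.mk_add_mk,
      Prod.mk_sub_mk, smul_eq_mul]
    ext i j
    fin_cases i <;> fin_cases j <;>
      (simp [Matrix.det_fin_three, Matrix.adjugate_fin_three, Matrix.trace_fin_three,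
        Matrix.mul_apply, Fin.sum_univ_three, Matrix.one_fin_three,
        Matrix.cons_val_zero, Matrix.cons_val_one, Matrix.head_cons, Matrix.cons_val_two,
        Matrix.vecTail, Matrix.vecHead, Matrix.add_apply, Matrix.sub_apply,
        Matrix.smul_apply, Matrix.neg_apply, smul_eq_mul]; try ring)
  · simp only [tW, flat, symp, tp, xmul, Pm, Qm, Sm, Tm, Prod.smul_mk, Prod.mk_add_mk,
      Prod.mk_sub_mk, smul_eq_mul]
    simp [Matrix.det_fin_three, Matrix.adjugate_fin_three, Matrix.trace_fin_three,
      Matrix.mul_apply, Fin.sum_univ_three, Matrix.one_fin_three,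
      Matrix.cons_val_zero, Matrix.cons_val_one, Matrix.head_cons, Matrix.cons_val_two,
      Matrix.vecTail, Matrix.vecHead]
    ring

end Aux

section Main

variable [CharZero F]

private lemma smul6_cancel {x y : Wsp F} (h : (6:F) • x = (6:F) • y) : x = y := by
  have h6 : (6:F)⁻¹ * 6 = 1 := by norm_num
  calc x = ((6:F)⁻¹ * 6) • x := by rw [h6, one_smul]
    _ = (6:F)⁻¹ • ((6:F) • x) := by rw [mul_smul]
    _ = (6:F)⁻¹ • ((6:F) • y) := by rw [h]
    _ = ((6:F)⁻¹ * 6) • y := by rw [mul_smul]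
    _ = y := by rw [h6, one_smul]

private lemma mat_ne_zero {c : Matrix (Fin 3) (Fin 3) F} (hc : c ≠ 0) :
    ∃ i j, c i j ≠ 0 := by
  by_contra h
  push_neg at h
  exact hc (Matrix.ext fun i j => by simpa using h i j)

private lemma comm_trace_zero {P : Matrix (Fin 3) (Fin 3) F}
    (hc : ∀ β, β * P = P * β) (ht : P.trace = 0) : P = 0 := by
  obtain ⟨r, hr⟩ := Matrix.mem_range_scalar_of_commute_single
    (M := P) (fun i j _ => hc _)
  have hr' : P = Matrix.diagonal (fun _ => r) := by
    rw [← hr]; rfl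
  rw [hr'] at ht ⊢
  simp [Matrix.trace_diagonal, Fin.sum_univ_three] at ht
  have : r = 0 := by linear_combination ht
  rw [this]
  simp

private lemma Rv_zero_of_blocks {a d : F} {b c : Matrix (Fin 3) (Fin 3) F}
    (hP : Pm a d b c = 0) (hQ : Qm a b c = 0) (hS : Sm d b c = 0)
    (hT : Tm a d b c = 0) : Rv ((a, b, c, d) : Wsp F) = 0 := by
  rw [Rv_blocks, hP, hQ, hS, hT]
  ext i j
  fin_cases i <;> fin_cases j <;> simp

end Main

/-- `R(v) = 0` iff `v` has rank at most one. -/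
theorem statement3 [CharZero F] (v : Wsp F) :
    Rv v = 0 ↔ ∀ w : Wsp F, ∃ lam : F, tW v v w = lam • v := by
  obtain ⟨a, b, c, d⟩ := v
  constructor
  · -- forward direction
    intro hR w
    obtain ⟨a', b', c', d'⟩ := w
    have hP : Pm a d b c = 0 := by
      have h := congrFun (congrFun hR 0) 0
      rw [Rv_blocks] at h
      simpa using h
    have hQ : Qm a b c = 0 := by
      have h := congrFun (congrFun hR 0) 1
      rw [Rv_blocks] at h
      simpa using h
    have hS : Sm d b c = 0 := by
      have h := congrFun (congrFun hR 1) 0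
      rw [Rv_blocks] at h
      simpa using h
    have hT : Tm a d b c = 0 := by
      have h := congrFun (congrFun hR 1) 1
      rw [Rv_blocks] at h
      simpa using h
    refine ⟨-(3:F)⁻¹ * symp (a,b,c,d) (a',b',c',d'), ?_⟩
    apply smul6_cancel
    rw [MI0 a d a' d' b c b' c', hP, hQ, hS, hT]
    refine Prod.ext_iff.mpr ⟨?_, Prod.ext_iff.mpr ⟨?_, Prod.ext_iff.mpr ⟨?_, ?_⟩⟩⟩
    · simp only [Prod.smul_mk, Prod.mk_add_mk, smul_eq_mul]
      simp
      ring
    · simp only [Prod.smul_mk, Prod.mk_add_mk, smul_eq_mul]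
      simp
      ext i j
      simp [Matrix.smul_apply]
      ring
    · simp only [Prod.smul_mk, Prod.mk_add_mk, smul_eq_mul]
      simp
      ext i j
      simp [Matrix.smul_apply]
      ring
    · simp only [Prod.smul_mk, Prod.mk_add_mk, smul_eq_mul]
      simp
      ring
  · -- reverse direction
    intro H
    by_cases hcd : c = 0 ∧ d = 0
    · -- the blocks P, S, T vanish identically; Q from the w = (0,0,0,1) relation
      obtain ⟨hc, hd⟩ := hcd
      subst hc hd
      obtain ⟨l2, h2⟩ := H (0, 0, 0, 1)
      have E2 := MI0 a 0 0 1 b 0 0 0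
      rw [h2] at E2
      have hQ : Qm a b 0 = 0 := by
        ext i j
        have h := congrArg (fun p : Wsp F => p.2.2.1 i j) E2
        simp only [Prod.smul_mk, Prod.mk_add_mk, smul_eq_mul, symp] at h
        simp [Matrix.add_apply, Matrix.sub_apply, Matrix.smul_apply, smul_eq_mul] at h
        simpa using h
      have hP : Pm a 0 b 0 = 0 := by simp [Pm]
      have hS : Sm 0 b 0 = 0 := by simp [Sm]
      have hT : Tm a 0 b 0 = 0 := by simp [Tm]
      exact Rv_zero_of_blocks hP hQ hS hT
    · -- c ≠ 0 or d ≠ 0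
      obtain ⟨l1, h1⟩ := H (1, 0, 0, 0)
      have E1 := MI0 a d 1 0 b c 0 0
      rw [h1] at E1
      have A1 : (6 * l1 - 2 * d) * a = -2 * (Pm a d b c).trace := by
        have h := congrArg (fun p : Wsp F => p.1) E1
        simp only [Prod.smul_mk, Prod.mk_add_mk, smul_eq_mul, symp] at h
        simp at h
        linear_combination h
      have A2 : ∀ i j, (6 * l1 - 2 * d) * b i j = -2 * Sm d b c i j := by
        intro i j
        have h := congrArg (fun p : Wsp F => p.2.1 i j) E1
        simp only [Prod.smul_mk, Prod.mk_add_mk, smul_eq_mul, symp] at h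
        simp [Matrix.add_apply, Matrix.sub_apply, Matrix.smul_apply, smul_eq_mul] at h
        linear_combination h
      have A3 : ∀ i j, (6 * l1 - 2 * d) * c i j = 0 := by
        intro i j
        have h := congrArg (fun p : Wsp F => p.2.2.1 i j) E1
        simp only [Prod.smul_mk, Prod.mk_add_mk, smul_eq_mul, symp] at h
        simp [Matrix.add_apply, Matrix.sub_apply, Matrix.smul_apply, smul_eq_mul] at h
        linear_combination h
      have A4 : (6 * l1 - 2 * d) * d = 0 := by
        have h := congrArg (fun p : Wsp F => p.2.2.2) E1
        simp only [Prod.smul_mk, Prod.mk_add_mk, smul_eq_mul, symp] at h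
        simp at h
        linear_combination h
      have hmu : 6 * l1 - 2 * d = 0 := by
        rcases not_and_or.mp hcd with hc0 | hd0
        · obtain ⟨i, j, hij⟩ := mat_ne_zero hc0
          exact (mul_eq_zero.mp (A3 i j)).resolve_right hij
        · exact (mul_eq_zero.mp A4).resolve_right hd0
      have htau : (Pm a d b c).trace = 0 := by
        rw [hmu] at A1
        linear_combination A1 / 2
      have hS : Sm d b c = 0 := by
        ext i j
        have h := A2 i j
        rw [hmu] at h
        simp at h ⊢
        linear_combination h
      by_cases hab : a = 0 ∧ b = 0
      · obtain ⟨ha, hb⟩ := hab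
        subst ha hb
        have hP : Pm 0 d 0 c = 0 := by simp [Pm]
        have hQ : Qm 0 0 c = 0 := by simp [Qm]
        have hT : Tm 0 d 0 c = 0 := by simp [Tm]
        exact Rv_zero_of_blocks hP hQ hS hT
      · -- a ≠ 0 or b ≠ 0 : get Q = 0 from w = (0,0,0,1)
        obtain ⟨l2, h2⟩ := H (0, 0, 0, 1)
        have E2 := MI0 a d 0 1 b c 0 0
        rw [h2] at E2
        have B1 : (6 * l2 + 2 * a) * a = 0 := by
          have h := congrArg (fun p : Wsp F => p.1) E2
          simp only [Prod.smul_mk, Prod.mk_add_mk, smul_eq_mul, symp] at h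
          simp at h
          linear_combination h
        have B2 : ∀ i j, (6 * l2 + 2 * a) * b i j = 0 := by
          intro i j
          have h := congrArg (fun p : Wsp F => p.2.1 i j) E2
          simp only [Prod.smul_mk, Prod.mk_add_mk, smul_eq_mul, symp] at h
          simp [Matrix.add_apply, Matrix.sub_apply, Matrix.smul_apply, smul_eq_mul] at h
          linear_combination h
        have B3 : ∀ i j, (6 * l2 + 2 * a) * c i j = -2 * Qm a b c i j := by
          intro i j
          have h := congrArg (fun p : Wsp F => p.2.2.1 i j) E2
          simp only [Prod.smul_mk, Prod.mk_add_mk, smul_eq_mul, symp] at h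
          simp [Matrix.add_apply, Matrix.sub_apply, Matrix.smul_apply, smul_eq_mul] at h
          linear_combination h
        have hnu : 6 * l2 + 2 * a = 0 := by
          rcases not_and_or.mp hab with ha0 | hb0
          · exact (mul_eq_zero.mp B1).resolve_right ha0
          · obtain ⟨i, j, hij⟩ := mat_ne_zero hb0
            exact (mul_eq_zero.mp (B2 i j)).resolve_right hij
        have hQ : Qm a b c = 0 := by
          ext i j
          have h := B3 i j
          rw [hnu] at h
          simp at h ⊢
          linear_combination h
        have hcomm : ∀ β : Matrix (Fin 3) (Fin 3) F,
            β * Pm a d b c = Tm a d b c * β := by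
          intro β
          obtain ⟨l3, h3⟩ := H (0, β, 0, 0)
          have E3 := MI0 a d 0 0 b c β 0
          rw [h3, hS, hQ, htau] at E3
          have C3 : ∀ i j, (6 * l3 + 2 * tp c β) * c i j = 0 := by
            intro i j
            have h := congrArg (fun p : Wsp F => p.2.2.1 i j) E3
            simp only [Prod.smul_mk, Prod.mk_add_mk, smul_eq_mul, symp] at h
            simp [Matrix.add_apply, Matrix.sub_apply, Matrix.smul_apply, smul_eq_mul] at h
            linear_combination h
          have C4 : (6 * l3 + 2 * tp c β) * d = 0 := by
            have h := congrArg (fun p : Wsp F => p.2.2.2) E3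
            simp only [Prod.smul_mk, Prod.mk_add_mk, smul_eq_mul, symp] at h
            simp at h
            linear_combination h
          have hl : 6 * l3 + 2 * tp c β = 0 := by
            rcases not_and_or.mp hcd with hc0 | hd0
            · obtain ⟨i, j, hij⟩ := mat_ne_zero hc0
              exact (mul_eq_zero.mp (C3 i j)).resolve_right hij
            · exact (mul_eq_zero.mp C4).resolve_right hd0
          have C2 : ∀ i j, (6 * l3 + 2 * tp c β) * b i j
              = 2 * (β * Pm a d b c) i j - 2 * (Tm a d b c * β) i j := by
            intro i j
            have h := congrArg (fun p : Wsp F => p.2.1 i j) E3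
            simp only [Prod.smul_mk, Prod.mk_add_mk, smul_eq_mul, symp] at h
            simp [Matrix.add_apply, Matrix.sub_apply, Matrix.smul_apply, smul_eq_mul] at h
            linear_combination h
          ext i j
          have h := C2 i j
          rw [hl] at h
          simp at h
          linear_combination -h / 2
        have hPT : Pm a d b c = Tm a d b c := by
          have h := hcomm 1
          simpa using h
        have hP : Pm a d b c = 0 :=
          comm_trace_zero (fun β => by rw [hcomm β, hPT]) htau
        have hT : Tm a d b c = 0 := by rw [← hPT]; exact hP
        exact Rv_zero_of_blocks hP hQ hS hT

end
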